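/- arXiv:1311.3696 — 4 statements merged into one kernel-verified Lean document; each statement's English description precedes it below -/
import Mathlib

section
/- Let T be a locally compact second countable (lcsc) group, Γ a closed subgroup of T, and X = T/Γ endowed with a T-quasi-invariant measure in the Haar measure class. Choose a Borel section σ : X → T of the quotient map α : T → T/Γ, and let π : T → Γ be the map sending σ(x)γ to γ; the standard cocycle is κ : T × X → Γ, κ(t,x) = π(tσ(x)). Let G be a Polish group and let d : T → G and δ : Γ → G be continuous homomorphisms. If the cocycle (t,x) ↦ δ(κ(t,x)) is cohomologous to the cocycle (t,x) ↦ d(t), then there exists g ∈ G such that for all γ ∈ Γ, δ(γ) = g⁻¹ d(γ) g. -/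
open MeasureTheory

/-- If the cocycle `δ ∘ κ` (with `κ` the standard cocycle of a closed subgroup `Γ` of an
lcsc group `T`, associated to a Borel section `σ` of `T → T ⧸ Γ`) is cohomologous to a
continuous homomorphism `d : T → G` into a Polish group `G`, then `δ` is a conjugate of
the restriction of `d` to `Γ`. -/
theorem conj_of_standard_cocycle_cohomologous_to_hom
    {T : Type*} [Group T] [TopologicalSpace T] [IsTopologicalGroup T]
    [LocallyCompactSpace T] [SecondCountableTopology T]
    [MeasurableSpace T] [BorelSpace T]
    (Γ : Subgroup T) (hΓ : IsClosed (Γ : Set T))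
    -- a left Haar measure on `T` and a quasi-invariant measure `μ` on `X = T ⧸ Γ`
    -- in the class of the pushforward of Haar measure
    (ν : Measure T) [ν.IsHaarMeasure]
    (μ : Measure (T ⧸ Γ))
    (hμ₁ : μ ≪ ν.map (QuotientGroup.mk : T → T ⧸ Γ))
    (hμ₂ : ν.map (QuotientGroup.mk : T → T ⧸ Γ) ≪ μ)
    (hqinv : ∀ t : T, Measure.QuasiMeasurePreserving (fun x : T ⧸ Γ => t • x) μ μ)
    -- a Borel section `σ` of the quotient map, the map `π : T → Γ`, `σ(x)γ ↦ γ`,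
    -- and the associated standard cocycle `κ(t,x) = π(t σ(x))`
    (σ : T ⧸ Γ → T) (hσ_meas : Measurable σ)
    (hσ_sec : ∀ x : T ⧸ Γ, (QuotientGroup.mk (σ x) : T ⧸ Γ) = x)
    (π : T → Γ) (hπ : ∀ t : T, (π t : T) = (σ (QuotientGroup.mk t))⁻¹ * t)
    (κ : T → T ⧸ Γ → Γ) (hκ : ∀ (t : T) (x : T ⧸ Γ), κ t x = π (t * σ x))
    -- a Polish group `G` and continuous homomorphisms `d : T → G`, `δ : Γ → G`
    {G : Type*} [Group G] [TopologicalSpace G] [IsTopologicalGroup G] [PolishSpace G]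
    [MeasurableSpace G] [BorelSpace G]
    (d : T →* G) (hd : Continuous d)
    (δ : Γ →* G) (hδ : Continuous δ)
    -- the cocycle `(t,x) ↦ δ(κ(t,x))` is cohomologous to the cocycle `(t,x) ↦ d(t)`
    (φ : T ⧸ Γ → G) (hφ : Measurable φ)
    (hcoh : ∀ t : T, ∀ᵐ x ∂μ, δ (κ t x) * φ x = φ (t • x) * d t) :
    ∃ g : G, ∀ γ : Γ, δ γ = g⁻¹ * d γ * g := by
  classical
  haveI : BorelSpace Γ := Subtype.borelSpace (Γ : Set T)
  have hmk : Measurable (QuotientGroup.mk : T → T ⧸ Γ) := measurable_quot_mk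
  -- measurability of π
  have hπmeas : Measurable π := by
    have h1 : Measurable (fun t : T => (σ (QuotientGroup.mk t))⁻¹ * t) :=
      ((hσ_meas.comp hmk).inv).mul measurable_id
    have : π = fun t => (⟨(σ (QuotientGroup.mk t))⁻¹ * t, (hπ t) ▸ (π t).2⟩ : Γ) :=
      funext fun t => Subtype.ext (hπ t)
    rw [this]
    exact Measurable.subtype_mk h1
  -- the function F
  set F : T → G := fun s => (δ (π s))⁻¹ * φ (QuotientGroup.mk s) * d s with hF
  have hFmeas : Measurable F :=
    (((hδ.measurable.comp hπmeas).inv).mul (hφ.comp hmk)).mul hd.measurable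
  -- pointwise coset identity
  have hcoset : ∀ (s : T) (γ : Γ), F (s * γ) = (δ γ)⁻¹ * F s * d γ := by
    intro s γ
    have hmkγ : (QuotientGroup.mk (s * γ) : T ⧸ Γ) = QuotientGroup.mk s :=
      QuotientGroup.mk_mul_of_mem s γ.2
    have hπγ : π (s * γ) = π s * γ := by
      apply Subtype.ext
      push_cast [hπ, hmkγ]
      group
    simp only [hF, hπγ, hmkγ, map_mul, mul_inv_rev]
    group
  -- translation identity a.e.
  have hκ' : ∀ (t s : T), κ t (QuotientGroup.mk s) = π (t * s) * (π s)⁻¹ := by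
    intro t s
    apply Subtype.ext
    have h1 : (QuotientGroup.mk (t * σ (QuotientGroup.mk s)) : T ⧸ Γ)
        = QuotientGroup.mk (t * s) := by
      calc (QuotientGroup.mk (t * σ (QuotientGroup.mk s)) : T ⧸ Γ)
          = t • (QuotientGroup.mk (σ (QuotientGroup.mk s)) : T ⧸ Γ) := rfl
        _ = t • (QuotientGroup.mk s : T ⧸ Γ) := by rw [hσ_sec]
        _ = QuotientGroup.mk (t * s) := rfl
    push_cast [hκ, hπ, h1]
    group
  have htrans : ∀ t : T, ∀ᵐ s ∂ν, F (t * s) = F s := by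
    intro t
    have h0 : ∀ᵐ x ∂(ν.map (QuotientGroup.mk : T → T ⧸ Γ)),
        δ (κ t x) * φ x = φ (t • x) * d t := hμ₂.ae_le (hcoh t)
    have h1 : ∀ᵐ s ∂ν, δ (κ t (QuotientGroup.mk s)) * φ (QuotientGroup.mk s)
        = φ (t • (QuotientGroup.mk s : T ⧸ Γ)) * d t :=
      ae_of_ae_map hmk.aemeasurable h0
    filter_upwards [h1] with s hs
    have hsmul : (t • (QuotientGroup.mk s : T ⧸ Γ)) = QuotientGroup.mk (t * s) := rfl
    rw [hsmul, hκ' t s] at hs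
    rw [map_mul, map_inv] at hs
    have hφts : φ (QuotientGroup.mk (t * s)) =
        δ (π (t * s)) * (δ (π s))⁻¹ * φ (QuotientGroup.mk s) * (d t)⁻¹ :=
      eq_mul_inv_iff_mul_eq.2 hs.symm
    simp only [hF, hφts, map_mul]
    group
  -- Fubini and swap
  have hmeasset : MeasurableSet {p : T × T | F (p.1 * p.2) = F p.2} := by
    have hm1 : Measurable fun p : T × T => F (p.1 * p.2) :=
      hFmeas.comp (measurable_fst.mul measurable_snd)
    have hm2 : Measurable fun p : T × T => F p.2 := hFmeas.comp measurable_snd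
    exact (hm1.prodMk hm2) isClosed_diagonal.measurableSet
  have hprod : ∀ᵐ p ∂(ν.prod ν), F (p.1 * p.2) = F p.2 :=
    (Measure.ae_prod_iff_ae_ae hmeasset).2 (ae_of_all _ fun t => htrans t)
  have hswap : ∀ᵐ p ∂(ν.prod ν), F (p.2 * p.1) = F p.1 := by
    have hmap : (ν.prod ν).map Prod.swap = ν.prod ν := Measure.prod_swap
    have : ∀ᵐ p ∂((ν.prod ν).map Prod.swap), F (p.1 * p.2) = F p.2 := by
      rw [hmap]; exact hprod
    exact ae_of_ae_map measurable_swap.aemeasurable this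
  have hae : ∀ᵐ s ∂ν, ∀ᵐ t ∂ν, F (t * s) = F s := Measure.ae_ae_of_ae_prod hswap
  -- pick a good point
  have hν0 : ν ≠ 0 := by
    intro h
    have : ν Set.univ ≠ 0 := (isOpen_univ.measure_pos ν ⟨1, trivial⟩).ne'
    simp [h] at this
  haveI : (ae ν).NeBot := ae_neBot.2 hν0
  obtain ⟨s₀, hs₀⟩ := hae.exists
  refine ⟨(F s₀)⁻¹, fun γ => ?_⟩
  -- right translation preserves null sets
  have htransr : ∀ (g : T) {P : T → Prop}, (∀ᵐ t ∂ν, P t) → ∀ᵐ t ∂ν, P (t * g) := by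
    intro g P h
    have hac : ν.map (· * g) ≪ ν := Measure.absolutelyContinuous_isHaarMeasure _ _
    exact ae_of_ae_map (measurable_mul_const g).aemeasurable (hac.ae_le h)
  have key2 : ∀ᵐ t ∂ν, F (t * (s₀ * γ * s₀⁻¹) * s₀) = F s₀ := htransr (s₀ * γ * s₀⁻¹) hs₀
  obtain ⟨t, ht1, ht2⟩ := (hs₀.and key2).exists
  have h3 : F (t * s₀ * γ) = F s₀ := by
    have : t * (s₀ * γ * s₀⁻¹) * s₀ = t * s₀ * γ := by group
    rwa [this] at ht2
  have h4 := hcoset (t * s₀) γ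
  rw [h3, ht1] at h4
  have h5 := congrArg (fun x => δ γ * x * (F s₀)⁻¹) h4
  rw [inv_inv]
  calc δ γ = δ γ * F s₀ * (F s₀)⁻¹ := by group
    _ = δ γ * ((δ γ)⁻¹ * F s₀ * d ↑γ) * (F s₀)⁻¹ := h5
    _ = F s₀ * d ↑γ * (F s₀)⁻¹ := by group
end

section
/- Let T be a locally compact second countable group, X a T-Lebesgue space, G a Polish group, c : T × X → G a measurable cocycle, and H a closed subgroup of G. Endow G/H with the quotient topology and its Borel structure, and let G act on G/H by left translations. Then there exists a c-equivariant measurable map φ : X → G/H if and only if c is cohomologous to a cocycle taking values in H. -/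
open MeasureTheory
open Pointwise


private noncomputable def natRecFun {α : Type*} (f0 : α → ℕ) (F : ℕ → (α → ℕ) → α → ℕ) :
    ℕ → α → ℕ
  | 0 => f0
  | (k+1) => F k (natRecFun f0 F k)

private lemma measurableSet_mem_image_mk {G : Type*} [Group G] [TopologicalSpace G]
    [IsTopologicalGroup G] [MeasurableSpace G] [BorelSpace G]
    (H : Subgroup G) {U : Set G} (hU : IsOpen U) :
    MeasurableSet {q : G ⧸ H | q ∈ QuotientGroup.mk '' U} := by
  rw [measurableSet_quotient]
  have : (Quotient.mk'' ⁻¹' {q : G ⧸ H | q ∈ QuotientGroup.mk '' U} : Set G)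
      = U * (H : Set G) := by
    ext x
    constructor
    · rintro ⟨y, hy, hxy⟩
      have : y⁻¹ * x ∈ H := QuotientGroup.eq.mp hxy
      exact ⟨y, hy, y⁻¹ * x, this, by group⟩
    · rintro ⟨y, hy, h, hh, rfl⟩
      exact ⟨y, hy, QuotientGroup.eq.mpr (by simpa using hh)⟩
  rw [this]
  exact (hU.mul_right).measurableSet

private lemma exists_measurable_section {G : Type*} [Group G] [TopologicalSpace G]
    [IsTopologicalGroup G] [PolishSpace G] [MeasurableSpace G] [BorelSpace G]
    (H : Subgroup G) (hH : IsClosed (H : Set G)) :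
    ∃ s : G ⧸ H → G, Measurable s ∧ ∀ q : G ⧸ H, (QuotientGroup.mk (s q) : G ⧸ H) = q := by
  classical
  letI := TopologicalSpace.upgradeIsCompletelyMetrizable G
  obtain ⟨u, hu⟩ := TopologicalSpace.exists_dense_seq G
  set r : ℕ → ℝ := fun k => (1/2 : ℝ)^k with hr
  have hrpos : ∀ k, 0 < r k := fun k => pow_pos (by norm_num) k
  set D : ℕ → ℝ → G ⧸ H → Prop :=
    fun n ε q => q ∈ QuotientGroup.mk '' Metric.ball (u n) ε with hD
  have hDmeas : ∀ n ε, MeasurableSet {q : G ⧸ H | D n ε q} :=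
    fun n ε => measurableSet_mem_image_mk H Metric.isOpen_ball
  have hex0 : ∀ q : G ⧸ H, ∃ n, D n (r 0) q := by
    intro q
    obtain ⟨x, rfl⟩ := QuotientGroup.mk_surjective q
    obtain ⟨n, hn⟩ := hu.exists_dist_lt x (hrpos 0)
    exact ⟨n, x, Metric.mem_ball.2 hn, rfl⟩
  let fseq : ℕ → G ⧸ H → ℕ := natRecFun (fun q => Nat.find (hex0 q))
    (fun k fk q =>
      if h : ∃ n, D n (r (k+1)) q ∧ dist (u n) (u (fk q)) < r k + r (k+1)
      then Nat.find h else 0)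
  have hfsucc : ∀ k q, fseq (k+1) q =
      (if h : ∃ n, D n (r (k+1)) q ∧ dist (u n) (u (fseq k q)) < r k + r (k+1)
       then Nat.find h else 0) := fun k q => rfl
  -- the step existence, given the invariant at stage k
  have hstep : ∀ k q, D (fseq k q) (r k) q →
      ∃ n, D n (r (k+1)) q ∧ dist (u n) (u (fseq k q)) < r k + r (k+1) := by
    intro k q hkq
    obtain ⟨x, hxball, hxq⟩ := hkq
    obtain ⟨n, hn⟩ := hu.exists_dist_lt x (hrpos (k+1))
    refine ⟨n, ⟨x, Metric.mem_ball.2 hn, hxq⟩, ?_⟩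
    calc dist (u n) (u (fseq k q)) ≤ dist (u n) x + dist x (u (fseq k q)) := dist_triangle _ _ _
      _ < r (k+1) + r k := by
          apply add_lt_add
          · rwa [dist_comm] at hn
          · exact Metric.mem_ball.1 hxball
      _ = r k + r (k+1) := add_comm _ _
  have hinv : ∀ k q, D (fseq k q) (r k) q := by
    intro k
    induction k with
    | zero => intro q; exact Nat.find_spec (hex0 q)
    | succ k ih =>
      intro q
      have hex := hstep k q (ih q)
      rw [hfsucc k q, dif_pos hex]
      exact (Nat.find_spec hex).1
  have hex : ∀ k q, ∃ n, D n (r (k+1)) q ∧ dist (u n) (u (fseq k q)) < r k + r (k+1) :=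
    fun k q => hstep k q (hinv k q)
  have hfind : ∀ k q, fseq (k+1) q = Nat.find (hex k q) := by
    intro k q
    rw [hfsucc k q, dif_pos (hex k q)]
  have hdist : ∀ k q, dist (u (fseq (k+1) q)) (u (fseq k q)) < r k + r (k+1) := by
    intro k q
    rw [hfind k q]
    exact (Nat.find_spec (hex k q)).2
  have hmeas : ∀ k, Measurable (fseq k) := by
    intro k
    induction k with
    | zero =>
      apply measurable_to_countable'
      intro n
      have heq : fseq 0 ⁻¹' {n} =
          {q : G ⧸ H | D n (r 0) q} ∩ ⋂ (m : ℕ), ⋂ (_ : m < n), {q : G ⧸ H | D m (r 0) q}ᶜ := by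
        ext q
        simp only [Set.mem_preimage, Set.mem_singleton_iff, Set.mem_inter_iff, Set.mem_setOf_eq,
          Set.mem_iInter, Set.mem_compl_iff]
        show Nat.find (hex0 q) = n ↔ _
        rw [Nat.find_eq_iff]
      rw [heq]
      exact (hDmeas n (r 0)).inter
        (MeasurableSet.iInter fun m => MeasurableSet.iInter fun _ => (hDmeas m (r 0)).compl)
    | succ k ih =>
      apply measurable_to_countable'
      intro n
      have hS : ∀ m : ℕ, MeasurableSet
          {q : G ⧸ H | D m (r (k+1)) q ∧ dist (u m) (u (fseq k q)) < r k + r (k+1)} := by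
        intro m
        refine (hDmeas m (r (k+1))).inter ?_
        exact ih (MeasurableSet.of_discrete
          (s := {j : ℕ | dist (u m) (u j) < r k + r (k+1)}))
      have heq : fseq (k+1) ⁻¹' {n} =
          {q : G ⧸ H | D n (r (k+1)) q ∧ dist (u n) (u (fseq k q)) < r k + r (k+1)} ∩
          ⋂ (m : ℕ), ⋂ (_ : m < n),
            {q : G ⧸ H | D m (r (k+1)) q ∧ dist (u m) (u (fseq k q)) < r k + r (k+1)}ᶜ := by
        ext q
        simp only [Set.mem_preimage, Set.mem_singleton_iff, Set.mem_inter_iff, Set.mem_setOf_eq,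
          Set.mem_iInter, Set.mem_compl_iff]
        rw [hfind k q, Nat.find_eq_iff]
      rw [heq]
      exact (hS n).inter
        (MeasurableSet.iInter fun m => MeasurableSet.iInter fun _ => (hS m).compl)
  have hcau : ∀ q : G ⧸ H, ∃ x : G,
      Filter.Tendsto (fun k => u (fseq k q)) Filter.atTop (nhds x) := by
    intro q
    apply cauchySeq_tendsto_of_complete
    apply cauchySeq_of_dist_le_of_summable (fun k => r k + r (k+1))
    · intro k
      rw [dist_comm]
      exact (hdist k q).le
    · have h1 : Summable r := summable_geometric_two
      have h2 : Summable (fun k => r (k+1)) := by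
        have := h1.mul_right (1/2 : ℝ)
        refine this.congr fun k => ?_
        simp [hr, pow_succ, mul_comm]
      exact h1.add h2
  choose s hs using hcau
  refine ⟨s, ?_, ?_⟩
  · exact measurable_of_tendsto_metrizable
      (fun k => measurable_from_top.comp (hmeas k)) (tendsto_pi_nhds.mpr hs)
  · intro q
    have hcl : IsClosed {x : G | (QuotientGroup.mk x : G ⧸ H) = q} := by
      obtain ⟨a, rfl⟩ := QuotientGroup.mk_surjective q
      have heq : {x : G | (QuotientGroup.mk x : G ⧸ H) = QuotientGroup.mk a}
          = (fun x : G => x⁻¹ * a) ⁻¹' (H : Set G) := by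
        ext x
        simpa [Set.mem_preimage] using QuotientGroup.eq (a := x) (b := a)
      rw [heq]
      exact hH.preimage (continuous_inv.mul continuous_const)
    have hmem : s q ∈ closure {x : G | (QuotientGroup.mk x : G ⧸ H) = q} := by
      rw [Metric.mem_closure_iff]
      intro ε hε
      obtain ⟨k1, hk1⟩ := exists_pow_lt_of_lt_one (half_pos hε) (by norm_num : (1/2 : ℝ) < 1)
      obtain ⟨k2, hk2⟩ := (Metric.tendsto_atTop.1 (hs q)) (ε/2) (half_pos hε)
      set k := max k1 k2 with hk
      obtain ⟨x, hxball, hxq⟩ := hinv k q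
      refine ⟨x, hxq, ?_⟩
      have hb : dist x (u (fseq k q)) < r k := Metric.mem_ball.1 hxball
      have hrk : r k ≤ r k1 :=
        pow_le_pow_of_le_one (by norm_num) (by norm_num) (le_max_left _ _)
      have h1 : dist (s q) (u (fseq k q)) < ε/2 := by
        rw [dist_comm]
        exact hk2 k (le_max_right _ _)
      have h2 : dist (u (fseq k q)) x < ε/2 := by
        rw [dist_comm]
        exact lt_of_lt_of_le hb (hrk.trans hk1.le)
      calc dist (s q) x ≤ dist (s q) (u (fseq k q)) + dist (u (fseq k q)) x := dist_triangle _ _ _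
        _ < ε/2 + ε/2 := add_lt_add h1 h2
        _ = ε := add_halves ε
    rwa [hcl.closure_eq] at hmem

/-- For a measurable cocycle `c : T × X → G` over a `T`-Lebesgue space `X` and a closed
subgroup `H ≤ G` of a Polish group `G`, there exists a `c`-equivariant measurable map
`X → G ⧸ H` iff `c` is cohomologous to a cocycle taking values in `H`. -/
theorem equivariant_map_iff_cohomologous_to_subgroup_valued
    {T X G : Type*}
    [Group T] [TopologicalSpace T] [IsTopologicalGroup T]
    [LocallyCompactSpace T] [SecondCountableTopology T]
    [MeasurableSpace T] [BorelSpace T]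
    [MeasurableSpace X] [StandardBorelSpace X] (μ : Measure X) [SigmaFinite μ]
    [MulAction T X] (hact : Measurable fun p : T × X => p.1 • p.2)
    (hqinv : ∀ t : T, Measure.QuasiMeasurePreserving (fun x : X => t • x) μ μ)
    [Group G] [TopologicalSpace G] [IsTopologicalGroup G] [PolishSpace G]
    [MeasurableSpace G] [BorelSpace G]
    (c : T → X → G) (hc_meas : Measurable fun p : T × X => c p.1 p.2)
    (hc : ∀ t t' : T, ∀ᵐ x ∂μ, c (t * t') x = c t (t' • x) * c t' x)
    (H : Subgroup G) (hH : IsClosed (H : Set G)) :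
    (∃ φ : X → G ⧸ H, Measurable φ ∧ ∀ t : T, ∀ᵐ x ∂μ, φ (t • x) = c t x • φ x) ↔
    (∃ c' : T → X → G,
      (Measurable fun p : T × X => c' p.1 p.2) ∧
      (∀ t t' : T, ∀ᵐ x ∂μ, c' (t * t') x = c' t (t' • x) * c' t' x) ∧
      (∀ (t : T) (x : X), c' t x ∈ H) ∧
      ∃ ψ : X → G, Measurable ψ ∧
        ∀ t : T, ∀ᵐ x ∂μ, c t x * ψ x = ψ (t • x) * c' t x) := by
  classical
  constructor
  · rintro ⟨φ, hφm, hφ⟩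
    obtain ⟨s, hsm, hs⟩ := exists_measurable_section H hH
    set ψ : X → G := fun x => s (φ x) with hψdef
    have hψm : Measurable ψ := hsm.comp hφm
    have hψ : ∀ x, (QuotientGroup.mk (ψ x) : G ⧸ H) = φ x := fun x => hs (φ x)
    set g : T → X → G := fun t x => (ψ (t • x))⁻¹ * (c t x * ψ x) with hgdef
    have hgm : Measurable fun p : T × X => g p.1 p.2 :=
      ((hψm.comp hact).inv).mul (hc_meas.mul (hψm.comp measurable_snd))
    have hmem : ∀ t : T, ∀ᵐ x ∂μ, g t x ∈ H := by
      intro t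
      filter_upwards [hφ t] with x hx
      have h1 : (QuotientGroup.mk (ψ (t • x)) : G ⧸ H) = QuotientGroup.mk (c t x * ψ x) := by
        rw [hψ (t • x), hx, ← hψ x]
        rfl
      exact QuotientGroup.eq.mp h1
    set c' : T → X → G := fun t x => if g t x ∈ H then g t x else 1 with hc'def
    refine ⟨c', ?_, ?_, ?_, ψ, hψm, ?_⟩
    · have hHmeas : MeasurableSet {p : T × X | g p.1 p.2 ∈ H} := hgm hH.measurableSet
      exact Measurable.ite hHmeas hgm measurable_const
    · intro t t'
      filter_upwards [hc t t', hmem (t * t'), hmem t', (hqinv t').ae (hmem t)]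
        with x h1 h2 h3 h4
      have e1 : c' (t * t') x = g (t * t') x := if_pos h2
      have e2 : c' t' x = g t' x := if_pos h3
      have e3 : c' t (t' • x) = g t (t' • x) := if_pos h4
      rw [e1, e2, e3, hgdef]
      simp only
      rw [h1, mul_smul]
      group
    · intro t x
      by_cases h : g t x ∈ H
      · rw [hc'def]; simp only [if_pos h]; exact h
      · rw [hc'def]; simp only [if_neg h]; exact H.one_mem
    · intro t
      filter_upwards [hmem t] with x hx
      have e1 : c' t x = g t x := if_pos hx
      rw [e1, hgdef]
      simp only
      group
  · rintro ⟨c', hc'm, hc'coc, hc'mem, ψ, hψm, hrel⟩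
    refine ⟨fun x => QuotientGroup.mk (ψ x), QuotientGroup.measurable_coe.comp hψm, ?_⟩
    intro t
    filter_upwards [hrel t] with x hx
    have h1 : (c t x • (QuotientGroup.mk (ψ x) : G ⧸ H)) = QuotientGroup.mk (c t x * ψ x) := rfl
    rw [h1, hx, QuotientGroup.mk_mul_of_mem _ (hc'mem t x)]
end

section
/- Let T be a locally compact second countable group, Γ a closed subgroup of T, and X = T/Γ endowed with a T-quasi-invariant measure in the Haar measure class. Choose a Borel section σ : X → T of the quotient map, let π : T → Γ be the map sending σ(x)γ to γ, and let κ(t,x) = π(tσ(x)) be the standard cocycle. Let G be a Polish group, δ : Γ → G a continuous homomorphism, and H a closed subgroup of G. If the cocycle (t,x) ↦ δ(κ(t,x)) is cohomologous to a cocycle taking values in H, then there exists g ∈ G such that g⁻¹ δ(Γ) g ⊆ H. -/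
open MeasureTheory

/-- If the cocycle `δ ∘ κ` (with `κ` the standard cocycle of a closed subgroup `Γ` of an
lcsc group `T`) is cohomologous to a cocycle taking values in a closed subgroup `H` of a
Polish group `G`, then some conjugate of `δ(Γ)` is contained in `H`. -/
theorem conj_in_subgroup_of_standard_cocycle_cohomologous
    {T : Type*} [Group T] [TopologicalSpace T] [IsTopologicalGroup T]
    [LocallyCompactSpace T] [SecondCountableTopology T]
    [MeasurableSpace T] [BorelSpace T]
    (Γ : Subgroup T) (hΓ : IsClosed (Γ : Set T))
    -- a left Haar measure on `T` and a quasi-invariant measure `μ` on `X = T ⧸ Γ`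
    -- in the class of the pushforward of Haar measure
    (ν : Measure T) [ν.IsHaarMeasure]
    (μ : Measure (T ⧸ Γ))
    (hμ₁ : μ ≪ ν.map (QuotientGroup.mk : T → T ⧸ Γ))
    (hμ₂ : ν.map (QuotientGroup.mk : T → T ⧸ Γ) ≪ μ)
    (hqinv : ∀ t : T, Measure.QuasiMeasurePreserving (fun x : T ⧸ Γ => t • x) μ μ)
    -- a Borel section `σ` of the quotient map, the map `π : T → Γ`, `σ(x)γ ↦ γ`,
    -- and the associated standard cocycle `κ(t,x) = π(t σ(x))`
    (σ : T ⧸ Γ → T) (hσ_meas : Measurable σ)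
    (hσ_sec : ∀ x : T ⧸ Γ, (QuotientGroup.mk (σ x) : T ⧸ Γ) = x)
    (π : T → Γ) (hπ : ∀ t : T, (π t : T) = (σ (QuotientGroup.mk t))⁻¹ * t)
    (κ : T → T ⧸ Γ → Γ) (hκ : ∀ (t : T) (x : T ⧸ Γ), κ t x = π (t * σ x))
    -- a Polish group `G`, a continuous homomorphism `δ : Γ → G`, a closed subgroup `H ≤ G`
    {G : Type*} [Group G] [TopologicalSpace G] [IsTopologicalGroup G] [PolishSpace G]
    [MeasurableSpace G] [BorelSpace G]
    (δ : Γ →* G) (hδ : Continuous δ)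
    (H : Subgroup G) (hH : IsClosed (H : Set G))
    -- `δ ∘ κ` is cohomologous to a cocycle `c'` taking values in `H`
    (c' : T → T ⧸ Γ → G)
    (hc'_meas : Measurable fun p : T × (T ⧸ Γ) => c' p.1 p.2)
    (hc' : ∀ t t' : T, ∀ᵐ x ∂μ, c' (t * t') x = c' t (t' • x) * c' t' x)
    (hc'H : ∀ (t : T) (x : T ⧸ Γ), c' t x ∈ H)
    (ψ : T ⧸ Γ → G) (hψ : Measurable ψ)
    (hcoh : ∀ t : T, ∀ᵐ x ∂μ, δ (κ t x) * ψ x = ψ (t • x) * c' t x) :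
    ∃ g : G, ∀ γ : Γ, g⁻¹ * δ γ * g ∈ H := by
  classical
  have hmk_meas : Measurable (QuotientGroup.mk : T → T ⧸ Γ) := QuotientGroup.measurable_coe
  -- membership fact used to build a measurable version of π
  have hΓmem : ∀ s : T, (σ (QuotientGroup.mk s))⁻¹ * s ∈ Γ := by
    intro s
    rw [← hπ s]
    exact (π s).2
  have hπ_meas : Measurable π := by
    have hπ' : π = fun s => (⟨(σ (QuotientGroup.mk s))⁻¹ * s, hΓmem s⟩ : Γ) := by
      funext s; exact Subtype.ext (hπ s)
    rw [hπ']
    exact ((hσ_meas.comp hmk_meas).inv.mul measurable_id).subtype_mk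
  -- the function F(s) = δ(π s)⁻¹ ψ(mk s)
  haveI : OpensMeasurableSpace Γ := inferInstanceAs (OpensMeasurableSpace (Γ : Set T))
  set F : T → G := fun s => (δ (π s))⁻¹ * ψ (QuotientGroup.mk s) with hFdef
  have hF_meas : Measurable F :=
    ((hδ.measurable.comp hπ_meas).inv).mul (hψ.comp hmk_meas)
  -- quotient maps of the projection
  have hmk_eq : ∀ t s : T,
      (QuotientGroup.mk (t * σ (QuotientGroup.mk s)) : T ⧸ Γ) = QuotientGroup.mk (t * s) := by
    intro t s
    rw [QuotientGroup.eq]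
    have h1 : (t * σ (QuotientGroup.mk s))⁻¹ * (t * s) = (σ (QuotientGroup.mk s))⁻¹ * s := by
      group
    rw [h1]
    exact hΓmem s
  have hmkγ : ∀ (s : T) (γ : Γ),
      (QuotientGroup.mk (s * (γ : T)) : T ⧸ Γ) = QuotientGroup.mk s := by
    intro s γ
    rw [QuotientGroup.eq]
    have h1 : (s * (γ : T))⁻¹ * s = ((γ : T))⁻¹ := by group
    rw [h1]
    exact Γ.inv_mem γ.2
  -- the cocycle identity for κ
  have hκeq : ∀ t s : T, κ t (QuotientGroup.mk s) = π (t * s) * (π s)⁻¹ := by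
    intro t s
    apply Subtype.ext
    rw [hκ]
    simp only [Subgroup.coe_mul, InvMemClass.coe_inv]
    rw [hπ, hπ, hπ, hmk_eq t s]
    group
  -- equivariance of F under right Γ-translations
  have hFγ : ∀ (s : T) (γ : Γ), F (s * (γ : T)) = (δ γ)⁻¹ * F s := by
    intro s γ
    have hπγ : π (s * (γ : T)) = π s * γ := by
      apply Subtype.ext
      simp only [Subgroup.coe_mul]
      rw [hπ, hπ, hmkγ s γ]
      group
    simp only [hFdef]
    rw [hπγ, hmkγ s γ, map_mul, mul_inv_rev]
    group
  -- transfer a.e. statements from μ to ν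
  have hqmp : Measure.QuasiMeasurePreserving (QuotientGroup.mk : T → T ⧸ Γ) ν μ :=
    ⟨hmk_meas, hμ₂⟩
  -- the key a.e. property of F
  have key : ∀ t : T, ∀ᵐ s ∂ν, (F (t * s))⁻¹ * F s ∈ H := by
    intro t
    filter_upwards [hqmp.ae (hcoh t)] with s hs
    have hsmul : t • (QuotientGroup.mk s : T ⧸ Γ) = QuotientGroup.mk (t * s) := rfl
    rw [hsmul] at hs
    have hδκ : δ (κ t (QuotientGroup.mk s)) = δ (π (t * s)) * (δ (π s))⁻¹ := by
      rw [hκeq t s, map_mul, map_inv]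
    have hc : c' t (QuotientGroup.mk s)
        = (ψ (QuotientGroup.mk (t * s)))⁻¹ * (δ (κ t (QuotientGroup.mk s)) * ψ (QuotientGroup.mk s)) := by
      rw [hs]; group
    have h2 : (F (t * s))⁻¹ * F s = c' t (QuotientGroup.mk s) := by
      rw [hc, hδκ]
      simp only [hFdef]
      group
    rw [h2]
    exact hc'H _ _
  -- measurability of the relevant set in T × T
  have hA_meas : MeasurableSet {p : T × T | (F (p.1 * p.2))⁻¹ * F p.2 ∈ H} := by
    have h1 : Measurable fun p : T × T => (F (p.1 * p.2))⁻¹ * F p.2 :=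
      ((hF_meas.comp measurable_mul).inv).mul (hF_meas.comp measurable_snd)
    exact h1 hH.measurableSet
  -- Fubini: swap the quantifiers
  have hae : ∀ᵐ s ∂ν, ∀ᵐ t ∂ν, (F (t * s))⁻¹ * F s ∈ H :=
    (Measure.ae_ae_comm hA_meas).mp (Filter.Eventually.of_forall key)
  -- ν is nonzero, so we can pick a point
  have hν0 : ν ≠ 0 := by
    intro h
    have : ν Set.univ ≠ 0 := (isOpen_univ.measure_ne_zero ν ⟨1, trivial⟩)
    rw [h] at this
    simp at this
  haveI : (ae ν).NeBot := ae_neBot.mpr hν0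
  obtain ⟨s₀, hs₀⟩ := hae.exists
  -- transport along right translation by s₀⁻¹
  have hu : ∀ᵐ u ∂ν, (F u)⁻¹ * F s₀ ∈ H := by
    filter_upwards [(quasiMeasurePreserving_mul_right ν s₀⁻¹).ae hs₀] with u h
    simpa using h
  refine ⟨F s₀, fun γ => ?_⟩
  obtain ⟨u, h1, h2⟩ :=
    (hu.and ((quasiMeasurePreserving_mul_right ν (γ : T)).ae hu)).exists
  have h3 : (F (u * (γ : T)))⁻¹ * F s₀ = (F u)⁻¹ * δ γ * F s₀ := by
    rw [hFγ u γ]; group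
  rw [h3] at h2
  have h4 := H.mul_mem (H.inv_mem h1) h2
  have h5 : ((F u)⁻¹ * F s₀)⁻¹ * ((F u)⁻¹ * δ γ * F s₀) = (F s₀)⁻¹ * δ γ * F s₀ := by
    group
  rwa [h5] at h4
end

section
/- Let k be a local field, i.e., a field with a nontrivial absolute value which is complete and locally compact. Let D ⊆ kⁿ be a compact subset whose k-linear span is all of kⁿ. Then the setwise stabilizer {g ∈ GLₙ(k) : g·D = D} is a compact subgroup of GLₙ(k). -/
open Matrix Set Metric

/-- Let `k` be a local field (a field with a nontrivial absolute value, complete and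
locally compact) and let `D ⊆ kⁿ` be a compact subset spanning `kⁿ`. Then the setwise
stabilizer `{g ∈ GLₙ(k) : g·D = D}` is a compact subgroup of `GLₙ(k)`. -/
theorem compact_stabilizer_of_compact_spanning_set
    {k : Type*} [NontriviallyNormedField k] [CompleteSpace k] [LocallyCompactSpace k]
    {n : ℕ} (D : Set (Fin n → k)) (hD : IsCompact D)
    (hspan : Submodule.span k D = ⊤) :
    ∃ S : Subgroup (Matrix.GeneralLinearGroup (Fin n) k),
      (S : Set (Matrix.GeneralLinearGroup (Fin n) k)) =
        {g : Matrix.GeneralLinearGroup (Fin n) k |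
          (fun v => Matrix.mulVec (g : Matrix (Fin n) (Fin n) k) v) '' D = D} ∧
      IsCompact (S : Set (Matrix.GeneralLinearGroup (Fin n) k)) := by
  classical
  have hProper : ProperSpace k := .of_locallyCompactSpace k
  have hDclosed : IsClosed D := hD.isClosed
  obtain ⟨r, hr⟩ : ∃ r, ∀ v ∈ D, ‖v‖ ≤ r := hD.isBounded.exists_norm_le
  -- `g⁻¹` stabilizes `D` whenever `g` does
  have hinv : ∀ g : Matrix.GeneralLinearGroup (Fin n) k,
      (fun v => Matrix.mulVec (g : Matrix (Fin n) (Fin n) k) v) '' D = D →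
      (fun v => Matrix.mulVec ((g⁻¹ : Matrix.GeneralLinearGroup (Fin n) k)
        : Matrix (Fin n) (Fin n) k) v) '' D = D := by
    intro g hg
    conv_lhs => rw [← hg]
    rw [Set.image_image]
    simp only [Matrix.mulVec_mulVec, ← Units.val_mul, inv_mul_cancel, Units.val_one,
      Matrix.one_mulVec]
    exact Set.image_id D
  -- The set of matrices mapping `D` into `D`
  set P : Set (Matrix (Fin n) (Fin n) k) := {A | ∀ v ∈ D, A.mulVec v ∈ D} with hPdef
  have hcont : ∀ v : Fin n → k,
      Continuous fun A : Matrix (Fin n) (Fin n) k => A.mulVec v := by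
    intro v
    exact LinearMap.continuous_of_finiteDimensional
      ({ toFun := fun A : Matrix (Fin n) (Fin n) k => A.mulVec v,
         map_add' := fun A B => Matrix.add_mulVec A B v,
         map_smul' := fun c A => Matrix.smul_mulVec c A v } :
        Matrix (Fin n) (Fin n) k →ₗ[k] (Fin n → k))
  have hPclosed : IsClosed P := by
    have : P = ⋂ v ∈ D, (fun A : Matrix (Fin n) (Fin n) k => A.mulVec v) ⁻¹' D := by
      ext A; simp [hPdef]
    rw [this]
    exact isClosed_biInter fun v _ => hDclosed.preimage (hcont v)
  -- Entries of matrices in `P` are bounded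
  have hcoef : ∀ j : Fin n, ∃ C : ℝ, ∀ A ∈ P, ∀ i, ‖A i j‖ ≤ C := by
    intro j
    have hmem : (Pi.single j (1 : k) : Fin n → k) ∈ Submodule.span k D := by
      rw [hspan]; trivial
    rw [Submodule.mem_span_set] at hmem
    obtain ⟨c, hcsupp, hcsum⟩ := hmem
    refine ⟨(c.support.sum fun v => ‖c v‖) * max r 0, fun A hA i => ?_⟩
    have h1 : A.mulVec (Pi.single j (1 : k)) = c.support.sum fun v => c v • A.mulVec v := by
      rw [← hcsum]
      rw [show (c.sum fun v a => a • v) = c.support.sum fun v => c v • v from rfl]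
      rw [show A.mulVec (c.support.sum fun v => c v • v)
            = A.mulVecLin (c.support.sum fun v => c v • v) from rfl]
      rw [map_sum]
      simp [Matrix.mulVecLin]
    have h2 : ‖A i j‖ ≤ ‖A.mulVec (Pi.single j (1 : k))‖ := by
      have := norm_le_pi_norm (A.mulVec (Pi.single j (1 : k))) i
      simpa [Matrix.mulVec_single] using this
    refine h2.trans ?_
    rw [h1]
    refine (norm_sum_le _ _).trans ?_
    rw [Finset.sum_mul]
    refine Finset.sum_le_sum fun v hv => ?_
    rw [norm_smul]
    refine mul_le_mul_of_nonneg_left ?_ (norm_nonneg _)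
    exact le_max_of_le_left (hr _ (hA v (hcsupp hv)))
  choose C hC using hcoef
  -- `P` is compact
  have hPcompact : IsCompact P := by
    have hQ : IsCompact (Set.univ.pi fun _ : Fin n => Set.univ.pi fun j : Fin n =>
        closedBall (0 : k) (C j) : Set (Matrix (Fin n) (Fin n) k)) := by
      exact isCompact_univ_pi fun i => isCompact_univ_pi fun j => isCompact_closedBall _ _
    refine hQ.of_isClosed_subset hPclosed ?_
    intro A hA
    intro i _
    intro j _
    simpa [mem_closedBall, dist_zero_right] using hC j A hA i
  -- The subgroup
  refine ⟨{ carrier := {g : Matrix.GeneralLinearGroup (Fin n) k |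
              (fun v => Matrix.mulVec (g : Matrix (Fin n) (Fin n) k) v) '' D = D}
            one_mem' := by simp [Matrix.one_mulVec, Set.image_id']
            mul_mem' := ?_
            inv_mem' := fun {g} hg => hinv g hg }, rfl, ?_⟩
  · intro a b ha hb
    simp only [Set.mem_setOf_eq] at *
    have : (fun v => ((↑(a * b) : Matrix (Fin n) (Fin n) k)) *ᵥ v) '' D
        = (fun v => ((↑a : Matrix (Fin n) (Fin n) k)) *ᵥ v) ''
          ((fun v => ((↑b : Matrix (Fin n) (Fin n) k)) *ᵥ v) '' D) := by
      rw [Set.image_image]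
      simp [Matrix.mulVec_mulVec]
    rw [this, hb, ha]
  · -- compactness of the stabilizer
    set Scar : Set (Matrix.GeneralLinearGroup (Fin n) k) :=
      {g | (fun v => Matrix.mulVec (g : Matrix (Fin n) (Fin n) k) v) '' D = D} with hScar
    show IsCompact Scar
    rw [(Units.isEmbedding_embedProduct).isCompact_iff]
    set E : Set (Matrix (Fin n) (Fin n) k × (Matrix (Fin n) (Fin n) k)ᵐᵒᵖ) :=
      {p | p.1 * p.2.unop = 1 ∧ p.2.unop * p.1 = 1 ∧ p.1 ∈ P ∧ p.2.unop ∈ P} with hEdef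
    have himg : Units.embedProduct _ '' Scar = E := by
      ext p
      constructor
      · rintro ⟨g, hg, rfl⟩
        have hg' := hinv g hg
        refine ⟨?_, ?_, ?_, ?_⟩
        · exact g.mul_inv
        · exact g.inv_mul
        · intro v hv
          rw [← hg]; exact Set.mem_image_of_mem _ hv
        · intro v hv
          rw [← hg']; exact Set.mem_image_of_mem _ hv
      · rintro ⟨h1, h2, hP1, hP2⟩
        refine ⟨⟨p.1, p.2.unop, h1, h2⟩, ?_, ?_⟩
        · show (fun v => p.1.mulVec v) '' D = D
          refine Set.Subset.antisymm ?_ ?_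
          · rintro _ ⟨v, hv, rfl⟩; exact hP1 v hv
          · intro v hv
            refine ⟨p.2.unop.mulVec v, hP2 v hv, ?_⟩
            simp [Matrix.mulVec_mulVec, h1, Matrix.one_mulVec]
        · rfl
    rw [himg]
    have hEclosed : IsClosed E := by
      have c1 : Continuous fun p : Matrix (Fin n) (Fin n) k × (Matrix (Fin n) (Fin n) k)ᵐᵒᵖ =>
          p.1 * p.2.unop :=
        continuous_fst.matrix_mul (MulOpposite.continuous_unop.comp continuous_snd)
      have c2 : Continuous fun p : Matrix (Fin n) (Fin n) k × (Matrix (Fin n) (Fin n) k)ᵐᵒᵖ =>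
          p.2.unop * p.1 :=
        (MulOpposite.continuous_unop.comp continuous_snd).matrix_mul continuous_fst
      have : E = {p | p.1 * p.2.unop = 1} ∩ {p | p.2.unop * p.1 = 1} ∩
          ((fun p : Matrix (Fin n) (Fin n) k × (Matrix (Fin n) (Fin n) k)ᵐᵒᵖ => p.1) ⁻¹' P ∩
           (fun p : Matrix (Fin n) (Fin n) k × (Matrix (Fin n) (Fin n) k)ᵐᵒᵖ =>
             p.2.unop) ⁻¹' P) := by
        ext p; simp [hEdef, and_assoc]
      rw [this]
      refine (((isClosed_eq c1 continuous_const).inter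
        (isClosed_eq c2 continuous_const)).inter
        ((hPclosed.preimage continuous_fst).inter
          (hPclosed.preimage (MulOpposite.continuous_unop.comp continuous_snd))))
    refine (hPcompact.prod (hPcompact.image MulOpposite.continuous_op)).of_isClosed_subset
      hEclosed ?_
    rintro p ⟨_, _, hP1, hP2⟩
    exact ⟨hP1, ⟨p.2.unop, hP2, rfl⟩⟩
end
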